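/- Let s, p, l be the real sequences defined in the context. Then for every integer n ≥ 1, l(n) = (1/4) · (5^n − 3^n)^2 · 3^((3^n − 6n + 3)/4) · 5^((3^n − 2n − 1)/4), where the powers of 3 and 5 are real powers with the indicated (possibly non-integer) exponents. -/

import Mathlib

noncomputable def hanoiE (n : ℕ) : ℝ := ((3 : ℝ) ^ n - 2 * (n : ℝ) - 1) / 4

lemma hanoiE_succ (n : ℕ) : hanoiE (n + 1) = 3 * hanoiE n + (n : ℝ) := by
  unfold hanoiE
  push_cast
  ring

lemma rpow_step (b : ℝ) (hb : 0 < b) (t : ℝ) (n : ℕ) :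
    b ^ (3 * t + (n : ℝ)) = (b ^ t) ^ 3 * b ^ n := by
  rw [Real.rpow_add hb, Real.rpow_natCast, ← Real.rpow_natCast (b ^ t) 3,
    ← Real.rpow_mul hb.le]
  norm_num [mul_comm]

lemma hanoi_key (s p l : ℕ → ℝ)
    (hs1 : s 1 = 3) (hp1 : p 1 = 1) (hl1 : l 1 = 1)
    (hs : ∀ n, 1 ≤ n → s (n + 1) = 3 * s n ^ 3 + 6 * s n ^ 2 * p n)
    (hp : ∀ n, 1 ≤ n → p (n + 1) = s n ^ 3 + 7 * s n ^ 2 * p n + 7 * s n * p n ^ 2 + s n ^ 2 * l n)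
    (hl : ∀ n, 1 ≤ n → l (n + 1) = s n ^ 3 + 12 * s n ^ 2 * p n + 3 * s n ^ 2 * l n + 36 * s n * p n ^ 2 + 12 * s n * p n * l n + 14 * p n ^ 3) :
    ∀ n, 1 ≤ n →
      s n = (3 : ℝ) ^ n * (3 : ℝ) ^ hanoiE n * (5 : ℝ) ^ hanoiE n ∧
      p n = (((5 : ℝ) ^ n - (3 : ℝ) ^ n) / 2) * (3 : ℝ) ^ hanoiE n * (5 : ℝ) ^ hanoiE n ∧
      l n = (((5 : ℝ) ^ n - (3 : ℝ) ^ n) ^ 2 * 3 * (3 : ℝ) ^ hanoiE n * (5 : ℝ) ^ hanoiE n) / (4 * (3 : ℝ) ^ n) := by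
  intro n hn
  induction n with
  | zero => omega
  | succ m ih =>
    rcases Nat.eq_or_lt_of_le hn with h1 | h1
    · have hm : m = 0 := by omega
      subst hm
      have hE : hanoiE 1 = 0 := by unfold hanoiE; norm_num
      rw [hE, hs1, hp1, hl1]
      norm_num [Real.rpow_zero]
    · have hm : 1 ≤ m := by omega
      obtain ⟨Hs, Hp, Hl⟩ := ih hm
      have hA : (3 : ℝ) ^ hanoiE (m + 1) = ((3 : ℝ) ^ hanoiE m) ^ 3 * (3 : ℝ) ^ m := by
        rw [hanoiE_succ]; exact rpow_step 3 (by norm_num) _ m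
      have hB : (5 : ℝ) ^ hanoiE (m + 1) = ((5 : ℝ) ^ hanoiE m) ^ 3 * (5 : ℝ) ^ m := by
        rw [hanoiE_succ]; exact rpow_step 5 (by norm_num) _ m
      have hx : ((3 : ℝ) ^ m) ≠ 0 := by positivity
      refine ⟨?_, ?_, ?_⟩
      · rw [hs m hm, Hs, Hp, hA, hB, pow_succ, pow_succ]
        field_simp
        ring
      · rw [hp m hm, Hs, Hp, Hl, hA, hB, pow_succ, pow_succ]
        field_simp
        ring
      · rw [hl m hm, Hs, Hp, Hl, hA, hB, pow_succ, pow_succ]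
        field_simp
        ring

theorem hanoi_stmt_4 (s p l : ℕ → ℝ)
    (hs1 : s 1 = 3) (hp1 : p 1 = 1) (hl1 : l 1 = 1)
    (hs : ∀ n, 1 ≤ n → s (n + 1) = 3 * s n ^ 3 + 6 * s n ^ 2 * p n)
    (hp : ∀ n, 1 ≤ n → p (n + 1) = s n ^ 3 + 7 * s n ^ 2 * p n + 7 * s n * p n ^ 2 + s n ^ 2 * l n)
    (hl : ∀ n, 1 ≤ n → l (n + 1) = s n ^ 3 + 12 * s n ^ 2 * p n + 3 * s n ^ 2 * l n + 36 * s n * p n ^ 2 + 12 * s n * p n * l n + 14 * p n ^ 3) :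
    ∀ n, 1 ≤ n → l n = (1 / 4) * ((5 : ℝ) ^ n - (3 : ℝ) ^ n) ^ 2 * (3 : ℝ) ^ (((3 : ℝ) ^ n - 6 * (n : ℝ) + 3) / 4) * (5 : ℝ) ^ (((3 : ℝ) ^ n - 2 * (n : ℝ) - 1) / 4) := by
  intro n hn
  obtain ⟨_, _, Hl⟩ := hanoi_key s p l hs1 hp1 hl1 hs hp hl n hn
  have hE : ((3 : ℝ) ^ n - 2 * (n : ℝ) - 1) / 4 = hanoiE n := rfl
  have hE2 : ((3 : ℝ) ^ n - 6 * (n : ℝ) + 3) / 4 = hanoiE n + (1 - (n : ℝ)) := by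
    unfold hanoiE; ring
  have h3 : (3 : ℝ) ^ (hanoiE n + (1 - (n : ℝ))) = (3 : ℝ) ^ hanoiE n * (3 / (3 : ℝ) ^ n) := by
    rw [Real.rpow_add (by norm_num : (0:ℝ) < 3), Real.rpow_sub (by norm_num : (0:ℝ) < 3),
      Real.rpow_one, Real.rpow_natCast]
  rw [Hl, hE, hE2, h3]
  have hx : ((3 : ℝ) ^ n) ≠ 0 := by positivity
  field_simp
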